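/- Objectivity of the discrete strain measures of the ℝ¹²-interpolation: let N₀, …, N_p : ℝ → ℝ be differentiable functions with ∑_{i=0}^p N_i(ξ) = 1 for all ξ, let r_i ∈ ℝ³ and A_i be real 3×3 matrices for i = 0,…,p, and define the interpolants r(ξ) := ∑ N_i(ξ) r_i and A(ξ) := ∑ N_i(ξ) A_i. Let R ∈ SO(3) and c ∈ ℝ³, and let r*(ξ) := ∑ N_i(ξ)(c + R r_i) and A*(ξ) := ∑ N_i(ξ)(R A_i) be the interpolants of the transformed nodal values. Then for every ξ: A*(ξ)ᵀ·(r*)'(ξ) = A(ξ)ᵀ·r'(ξ) and A*(ξ)ᵀ·(A*)'(ξ) = A(ξ)ᵀ·A'(ξ). -/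
import Mathlib


open Matrix

/-- Entrywise derivative of a matrix-valued function. -/
noncomputable def mderiv {n : Type*} (A : ℝ → Matrix n n ℝ) (t : ℝ) : Matrix n n ℝ :=
  Matrix.of fun i j => deriv (fun s => A s i j) t

/-- Entrywise derivative of a vector-valued function. -/
noncomputable def vderiv {n : Type*} (r : ℝ → n → ℝ) (t : ℝ) : n → ℝ :=
  fun i => deriv (fun s => r s i) t

/-- The unique skew-symmetric matrix `ψ̃` with `ψ̃ v = ψ × v` for all `v`. -/
def tilde (ψ : Fin 3 → ℝ) : Matrix (Fin 3) (Fin 3) ℝ :=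
  !![0, -ψ 2, ψ 1; ψ 2, 0, -ψ 0; -ψ 1, ψ 0, 0]

theorem R12_discrete_strains_objective (p : ℕ) (N : Fin (p + 1) → ℝ → ℝ)
    (hN : ∀ i, Differentiable ℝ (N i)) (hsum : ∀ ξ, ∑ i, N i ξ = 1)
    (r : Fin (p + 1) → Fin 3 → ℝ) (Am : Fin (p + 1) → Matrix (Fin 3) (Fin 3) ℝ)
    (R : Matrix (Fin 3) (Fin 3) ℝ) (hR : Rᵀ * R = 1) (hRdet : R.det = 1)
    (c : Fin 3 → ℝ) (ξ : ℝ) :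
    ((∑ i, N i ξ • (R * Am i))ᵀ *ᵥ vderiv (fun s => ∑ i, N i s • (c + R *ᵥ r i)) ξ
        = (∑ i, N i ξ • Am i)ᵀ *ᵥ vderiv (fun s => ∑ i, N i s • r i) ξ) ∧
      ((∑ i, N i ξ • (R * Am i))ᵀ * mderiv (fun s => ∑ i, N i s • (R * Am i)) ξ
        = (∑ i, N i ξ • Am i)ᵀ * mderiv (fun s => ∑ i, N i s • Am i) ξ) := by
  classical
  set D : Fin (p + 1) → ℝ := fun i => deriv (N i) ξ with hDdef
  -- sum of derivatives is zero
  have hDsum : ∑ i, D i = 0 := by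
    have h1 : (fun s => ∑ i, N i s) = fun _ => (1 : ℝ) := funext hsum
    have h2 : deriv (fun s => ∑ i, N i s) ξ = 0 := by rw [h1]; simp
    rw [deriv_fun_sum (fun i _ => (hN i) ξ)] at h2
    exact h2
  -- vector derivative
  have vd : ∀ v : Fin (p + 1) → Fin 3 → ℝ,
      vderiv (fun s => ∑ i, N i s • v i) ξ = ∑ i, D i • v i := by
    intro v
    funext j
    simp only [vderiv, Finset.sum_apply, Pi.smul_apply, smul_eq_mul]
    rw [deriv_fun_sum (fun i _ => ((hN i) ξ).mul_const _)]
    exact Finset.sum_congr rfl fun i _ => by rw [deriv_mul_const ((hN i) ξ)]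
  -- matrix derivative
  have md : ∀ M : Fin (p + 1) → Matrix (Fin 3) (Fin 3) ℝ,
      mderiv (fun s => ∑ i, N i s • M i) ξ = ∑ i, D i • M i := by
    intro M
    ext a b
    simp only [mderiv, Matrix.of_apply, Finset.sum_apply, Matrix.sum_apply,
      Matrix.smul_apply, smul_eq_mul]
    rw [deriv_fun_sum (fun i _ => ((hN i) ξ).mul_const _)]
    exact Finset.sum_congr rfl fun i _ => by rw [deriv_mul_const ((hN i) ξ)]
  have hRA : ∑ i, N i ξ • (R * Am i) = R * ∑ i, N i ξ • Am i := by
    rw [Finset.mul_sum]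
    exact Finset.sum_congr rfl fun i _ => (mul_smul_comm _ _ _).symm
  set A : Matrix (Fin 3) (Fin 3) ℝ := ∑ i, N i ξ • Am i with hA
  constructor
  · rw [vd, vd]
    have hw : ∑ i, D i • (c + R *ᵥ r i) = R *ᵥ ∑ i, D i • r i := by
      have hmv : R *ᵥ ∑ i, D i • r i = ∑ i, D i • (R *ᵥ r i) := by
        show R.mulVecLin (∑ i, D i • r i) = _
        simp only [map_sum, _root_.map_smul, Matrix.mulVecLin_apply]
      simp only [smul_add, Finset.sum_add_distrib, ← Finset.sum_smul, hDsum, zero_smul,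
        zero_add, hmv]
    rw [hw, hRA, Matrix.transpose_mul, Matrix.mulVec_mulVec, Matrix.mul_assoc, hR,
      Matrix.mul_one]
  · rw [md, md]
    have hRM : ∑ i, D i • (R * Am i) = R * ∑ i, D i • Am i := by
      rw [Finset.mul_sum]
      exact Finset.sum_congr rfl fun i _ => (mul_smul_comm _ _ _).symm
    rw [hRM, hRA, Matrix.transpose_mul, Matrix.mul_assoc, ← Matrix.mul_assoc Rᵀ, hR, Matrix.one_mul]
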